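/- Let a₁, a₂, a₃ ∈ ℝⁿ with a₂ ≠ a₁ ≠ a₃, and set v₂ = (a₁ - a₂)/‖a₁ - a₂‖, v₃ = (a₁ - a₃)/‖a₁ - a₃‖. Then a₁ minimizes φ(x) = ‖x-a₁‖+‖x-a₂‖+‖x-a₃‖ if and only if ⟨v₂, v₃⟩ ≤ -1/2. -/

import Mathlib

lemma aux_sqrt_bound {E : Type*} [NormedAddCommGroup E] [InnerProductSpace ℝ E]
    (y d : E) (t : ℝ) (hy : y ≠ 0) (ht : 0 ≤ t) :
    ‖y + t • d‖ ≤ ‖y‖ + (2*t*(inner ℝ y d : ℝ) + t^2*‖d‖^2)/(2*‖y‖) := by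
  have ha : 0 < ‖y‖ := norm_pos_iff.mpr hy
  have hsq : ‖y + t • d‖^2 = ‖y‖^2 + (2*t*(inner ℝ y d : ℝ) + t^2*‖d‖^2) := by
    rw [@norm_add_sq_real, real_inner_smul_right, norm_smul, Real.norm_eq_abs,
      abs_of_nonneg ht]
    ring
  have h2 : ‖y + t • d‖ - ‖y‖ ≤ (2*t*(inner ℝ y d : ℝ) + t^2*‖d‖^2)/(2*‖y‖) := by
    rw [le_div_iff₀ (by positivity)]
    nlinarith [sq_nonneg (‖y + t • d‖ - ‖y‖)]
  linarith

/-- Pure real arithmetic for the contradiction step. -/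
lemma aux_arith (nu nw S ip t : ℝ) (hnu : 0 < nu) (hnw : 0 < nw)
    (hS2 : S^2 = 2 + 2*ip) (hS1 : 1 < S)
    (ht : t = (S^2 - S) / (2 * (S^2 * (nu⁻¹ + nw⁻¹) / 2))) :
    t * S + (nu + (2*t*(-(nu * (1 + ip))) + t^2*S^2)/(2*nu))
      + (nw + (2*t*(-(nw * (1 + ip))) + t^2*S^2)/(2*nw)) < nu + nw := by
  have hSpos : 0 < S := lt_trans one_pos hS1
  have hK : 0 < S^2 * (nu⁻¹ + nw⁻¹) / 2 := by positivity
  have hc : 0 < S^2 - S := by nlinarith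
  have htpos : 0 < t := by rw [ht]; positivity
  have e2 : (2*t*(-(nu * (1 + ip))) + t^2*S^2)/(2*nu)
      = -(t*(1+ip)) + t^2*S^2/(2*nu) := by field_simp
  have e3 : (2*t*(-(nw * (1 + ip))) + t^2*S^2)/(2*nw)
      = -(t*(1+ip)) + t^2*S^2/(2*nw) := by field_simp
  rw [e2, e3]
  have htK : t * (S^2 * (nu⁻¹ + nw⁻¹) / 2) = (S^2 - S)/2 := by
    rw [ht]; field_simp
  have hKt : t^2*S^2/(2*nu) + t^2*S^2/(2*nw) = t * (t * (S^2 * (nu⁻¹ + nw⁻¹) / 2)) := by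
    field_simp
  have h1 : t * S - 2*(t*(1+ip)) = -(t * (S^2 - S)) := by nlinarith
  have key : t * S - 2*(t*(1+ip)) + (t^2*S^2/(2*nu) + t^2*S^2/(2*nw)) < 0 := by
    rw [hKt, htK, h1]
    nlinarith
  linarith

theorem stmt_11 (n : ℕ) (a₁ a₂ a₃ : EuclideanSpace ℝ (Fin n))
    (h2 : a₂ ≠ a₁) (h3 : a₃ ≠ a₁) :
    (∀ x, ‖a₁ - a₁‖ + ‖a₁ - a₂‖ + ‖a₁ - a₃‖ ≤ ‖x - a₁‖ + ‖x - a₂‖ + ‖x - a₃‖) ↔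
      (inner ℝ (‖a₁ - a₂‖⁻¹ • (a₁ - a₂)) (‖a₁ - a₃‖⁻¹ • (a₁ - a₃)) : ℝ) ≤ -(1/2) := by
  obtain ⟨u, hu_def⟩ : ∃ u : EuclideanSpace ℝ (Fin n), a₁ - a₂ = u := ⟨_, rfl⟩
  obtain ⟨w, hw_def⟩ : ∃ w : EuclideanSpace ℝ (Fin n), a₁ - a₃ = w := ⟨_, rfl⟩
  rw [hu_def, hw_def]
  have hu : u ≠ 0 := hu_def ▸ sub_ne_zero.mpr (Ne.symm h2)
  have hw : w ≠ 0 := hw_def ▸ sub_ne_zero.mpr (Ne.symm h3)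
  have hnu : 0 < ‖u‖ := norm_pos_iff.mpr hu
  have hnw : 0 < ‖w‖ := norm_pos_iff.mpr hw
  obtain ⟨v₂, hv2_def⟩ : ∃ v : EuclideanSpace ℝ (Fin n), ‖u‖⁻¹ • u = v := ⟨_, rfl⟩
  obtain ⟨v₃, hv3_def⟩ : ∃ v : EuclideanSpace ℝ (Fin n), ‖w‖⁻¹ • w = v := ⟨_, rfl⟩
  rw [hv2_def, hv3_def]
  have hv2n : ‖v₂‖ = 1 := by
    rw [← hv2_def, norm_smul, Real.norm_eq_abs, abs_of_nonneg (by positivity),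
      inv_mul_cancel₀ hnu.ne']
  have hv3n : ‖v₃‖ = 1 := by
    rw [← hv3_def, norm_smul, Real.norm_eq_abs, abs_of_nonneg (by positivity),
      inv_mul_cancel₀ hnw.ne']
  have hv2u : (inner ℝ v₂ u : ℝ) = ‖u‖ := by
    rw [← hv2_def, real_inner_smul_left, real_inner_self_eq_norm_sq]
    field_simp
  have hv3w : (inner ℝ v₃ w : ℝ) = ‖w‖ := by
    rw [← hv3_def, real_inner_smul_left, real_inner_self_eq_norm_sq]
    field_simp
  obtain ⟨ip, hip_def⟩ : ∃ r : ℝ, (inner ℝ v₂ v₃ : ℝ) = r := ⟨_, rfl⟩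
  rw [hip_def]
  obtain ⟨s, hs_def⟩ : ∃ s : EuclideanSpace ℝ (Fin n), v₂ + v₃ = s := ⟨_, rfl⟩
  have hsn : ‖s‖^2 = 2 + 2 * ip := by
    rw [← hs_def, @norm_add_sq_real, hv2n, hv3n, hip_def]; ring
  have hzero : ‖a₁ - a₁‖ = (0 : ℝ) := by rw [sub_self, norm_zero]
  constructor
  · -- minimality → ip ≤ -1/2
    intro h
    by_contra hcon
    push_neg at hcon
    have hS1 : 1 < ‖s‖ := by nlinarith [norm_nonneg s]
    obtain ⟨t, ht⟩ : ∃ t : ℝ,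
        t = (‖s‖^2 - ‖s‖) / (2 * (‖s‖^2 * (‖u‖⁻¹ + ‖w‖⁻¹) / 2)) := ⟨_, rfl⟩
    have htpos : 0 < t := by
      rw [ht]
      have h1 : 0 < ‖s‖^2 - ‖s‖ := by nlinarith
      have h2 : 0 < ‖s‖^2 * (‖u‖⁻¹ + ‖w‖⁻¹) / 2 := by positivity
      positivity
    obtain ⟨x, hx_def⟩ : ∃ x : EuclideanSpace ℝ (Fin n), a₁ - t • s = x := ⟨_, rfl⟩
    -- inner ℝ products with s
    have huv2 : (inner ℝ u v₂ : ℝ) = ‖u‖ := by rw [real_inner_comm]; exact hv2u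
    have hwv3 : (inner ℝ w v₃ : ℝ) = ‖w‖ := by rw [real_inner_comm]; exact hv3w
    have huv3 : (inner ℝ u v₃ : ℝ) = ‖u‖ * ip := by
      have : ip = ‖u‖⁻¹ * inner ℝ u v₃ := by
        rw [← hip_def, ← hv2_def, real_inner_smul_left]
      rw [this]; field_simp
    have hwv2 : (inner ℝ w v₂ : ℝ) = ‖w‖ * ip := by
      have : ip = ‖w‖⁻¹ * inner ℝ w v₂ := by
        rw [← hip_def, ← hv3_def, real_inner_smul_right, real_inner_comm]
      rw [this]; field_simp
    have hus : (inner ℝ u s : ℝ) = ‖u‖ * (1 + ip) := by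
      rw [← hs_def, inner_add_right, huv2, huv3]; ring
    have hws : (inner ℝ w s : ℝ) = ‖w‖ * (1 + ip) := by
      rw [← hs_def, inner_add_right, hwv2, hwv3]; ring
    -- norm bounds
    have hx1 : ‖x - a₁‖ = t * ‖s‖ := by
      rw [← hx_def, sub_sub_cancel_left, norm_neg, norm_smul, Real.norm_eq_abs,
        abs_of_nonneg htpos.le]
    have hx2 : ‖x - a₂‖ ≤ ‖u‖ + (2*t*(-(‖u‖ * (1 + ip))) + t^2*‖s‖^2)/(2*‖u‖) := by
      have he : x - a₂ = u + t • (-s) := by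
        rw [← hx_def, ← hu_def]; module
      rw [he]
      have := aux_sqrt_bound u (-s) t hu htpos.le
      rwa [inner_neg_right, hus, norm_neg] at this
    have hx3 : ‖x - a₃‖ ≤ ‖w‖ + (2*t*(-(‖w‖ * (1 + ip))) + t^2*‖s‖^2)/(2*‖w‖) := by
      have he : x - a₃ = w + t • (-s) := by
        rw [← hx_def, ← hw_def]; module
      rw [he]
      have := aux_sqrt_bound w (-s) t hw htpos.le
      rwa [inner_neg_right, hws, norm_neg] at this
    have key := aux_arith ‖u‖ ‖w‖ ‖s‖ ip t hnu hnw hsn hS1 ht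
    have hhx := h x
    rw [hzero] at hhx
    linarith
  · -- ip ≤ -1/2 → minimality
    intro hip x
    rw [hzero]
    have hsle : ‖s‖ ≤ 1 := by nlinarith [norm_nonneg s]
    have hA : (inner ℝ v₂ (x - a₂) : ℝ) ≤ ‖x - a₂‖ := by
      have := real_inner_le_norm v₂ (x - a₂)
      rwa [hv2n, one_mul] at this
    have hA' : (inner ℝ v₂ (x - a₂) : ℝ) = inner ℝ v₂ (x - a₁) + ‖u‖ := by
      have he : x - a₂ = (x - a₁) + u := by rw [← hu_def]; module
      rw [he, inner_add_right, hv2u]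
    have hB : (inner ℝ v₃ (x - a₃) : ℝ) ≤ ‖x - a₃‖ := by
      have := real_inner_le_norm v₃ (x - a₃)
      rwa [hv3n, one_mul] at this
    have hB' : (inner ℝ v₃ (x - a₃) : ℝ) = inner ℝ v₃ (x - a₁) + ‖w‖ := by
      have he : x - a₃ = (x - a₁) + w := by rw [← hw_def]; module
      rw [he, inner_add_right, hv3w]
    have hC : -((inner ℝ v₂ (x - a₁) : ℝ) + inner ℝ v₃ (x - a₁)) ≤ ‖x - a₁‖ := by
      have h1 : |(inner ℝ s (x - a₁) : ℝ)| ≤ ‖s‖ * ‖x - a₁‖ :=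
        abs_real_inner_le_norm s (x - a₁)
      have h2 : (inner ℝ s (x - a₁) : ℝ) = inner ℝ v₂ (x - a₁) + inner ℝ v₃ (x - a₁) := by
        rw [← hs_def, inner_add_left]
      have h3 : ‖s‖ * ‖x - a₁‖ ≤ ‖x - a₁‖ :=
        mul_le_of_le_one_left (norm_nonneg _) hsle
      rw [h2] at h1
      linarith [neg_le_abs ((inner ℝ v₂ (x - a₁) : ℝ) + inner ℝ v₃ (x - a₁))]
    linarith
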